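/- Let w_{i₁}⋯w_{i_n} be a reduced word in the Weyl group W (with n ≥ 1) and let γ ∈ V satisfy ⟨γ, α⟩ ≥ 0 for every α ∈ Δ. Then ⟨w_{i₁}w_{i₂}⋯w_{i_n}(γ), α_{i₁}⟩ ≤ 0. -/
import Mathlib

open scoped RealInnerProductSpace

noncomputable section

namespace MDS

def wrefl (V : Type) [NormedAddCommGroup V] [InnerProductSpace ℝ V] (α : V) : V → V :=
  fun v => v - (2 * ⟪v, α⟫ / ⟪α, α⟫) • α

section aux
variable {V : Type} [NormedAddCommGroup V] [InnerProductSpace ℝ V]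

lemma wrefl_apply (α v : V) : wrefl V α v = v - (2 * ⟪v, α⟫ / ⟪α, α⟫) • α := rfl

lemma wrefl_inner (α : V) (hα : α ≠ 0) (u v : V) :
    ⟪wrefl V α u, wrefl V α v⟫ = ⟪u, v⟫ := by
  have hQ : ⟪α, α⟫ ≠ (0:ℝ) := fun h => hα (inner_self_eq_zero.mp h)
  simp only [wrefl_apply, inner_sub_left, inner_sub_right, real_inner_smul_left,
    real_inner_smul_right]
  rw [real_inner_comm α u, real_inner_comm α v]
  field_simp
  ring

lemma wrefl_sub (α u v : V) : wrefl V α (u - v) = wrefl V α u - wrefl V α v := by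
  simp only [wrefl_apply, inner_sub_left]
  have h : 2 * (⟪u, α⟫ - ⟪v, α⟫) / ⟪α, α⟫ = 2 * ⟪u, α⟫ / ⟪α, α⟫ - 2 * ⟪v, α⟫ / ⟪α, α⟫ := by
    ring
  rw [h, sub_smul]
  abel

lemma wrefl_smul (α : V) (c : ℝ) (v : V) : wrefl V α (c • v) = c • wrefl V α v := by
  simp only [wrefl_apply, real_inner_smul_left]
  have h : 2 * (c * ⟪v, α⟫) / ⟪α, α⟫ = c * (2 * ⟪v, α⟫ / ⟪α, α⟫) := by ring
  rw [h, smul_sub, smul_smul]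

lemma wrefl_invol (α : V) (hα : α ≠ 0) (v : V) : wrefl V α (wrefl V α v) = v := by
  have hQ : ⟪α, α⟫ ≠ (0:ℝ) := fun h => hα (inner_self_eq_zero.mp h)
  simp only [wrefl_apply, inner_sub_left, real_inner_smul_left]
  rw [sub_sub, ← add_smul]
  have h : 2 * ⟪v, α⟫ / ⟪α, α⟫ +
      2 * (⟪v, α⟫ - 2 * ⟪v, α⟫ / ⟪α, α⟫ * ⟪α, α⟫) / ⟪α, α⟫ = 0 := by
    field_simp
    ring
  rw [h, zero_smul, sub_zero]

lemma wrefl_self (α : V) (hα : α ≠ 0) : wrefl V α α = -α := by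
  have hQ : ⟪α, α⟫ ≠ (0:ℝ) := fun h => hα (inner_self_eq_zero.mp h)
  rw [wrefl_apply, mul_div_assoc, div_self hQ, mul_one]
  rw [two_smul]
  abel

end aux


section word
variable {V : Type} [NormedAddCommGroup V] [InnerProductSpace ℝ V]
variable {r : ℕ} (Δ : Fin r → V)

def Fc (l : List (Fin r)) : V → V :=
  (l.map fun i => wrefl V (Δ i)).foldr (· ∘ ·) id

@[simp] lemma Fc_nil : Fc Δ [] = id := rfl

@[simp] lemma Fc_cons (a : Fin r) (l : List (Fin r)) :
    Fc Δ (a :: l) = wrefl V (Δ a) ∘ Fc Δ l := rfl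

lemma Fc_append (l₁ l₂ : List (Fin r)) (v : V) :
    Fc Δ (l₁ ++ l₂) v = Fc Δ l₁ (Fc Δ l₂ v) := by
  induction l₁ with
  | nil => rfl
  | cons a t ih => simp [Fc_cons, Function.comp, ih]

lemma Fc_inner (hΔ0 : ∀ j, Δ j ≠ 0) (l : List (Fin r)) (u v : V) :
    ⟪Fc Δ l u, Fc Δ l v⟫ = ⟪u, v⟫ := by
  induction l with
  | nil => rfl
  | cons a t ih => simp only [Fc_cons, Function.comp_apply, wrefl_inner _ (hΔ0 a), ih]

lemma Fc_sub (l : List (Fin r)) (u v : V) :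
    Fc Δ l (u - v) = Fc Δ l u - Fc Δ l v := by
  induction l with
  | nil => rfl
  | cons a t ih => simp only [Fc_cons, Function.comp_apply, ih, wrefl_sub]

lemma Fc_smul (l : List (Fin r)) (c : ℝ) (v : V) :
    Fc Δ l (c • v) = c • Fc Δ l v := by
  induction l with
  | nil => rfl
  | cons a t ih => simp only [Fc_cons, Function.comp_apply, ih, wrefl_smul]

lemma Fc_rev (hΔ0 : ∀ j, Δ j ≠ 0) (l : List (Fin r)) (v : V) :
    Fc Δ l.reverse (Fc Δ l v) = v := by
  induction l with
  | nil => rfl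
  | cons a t ih =>
    simp only [List.reverse_cons, Fc_cons, Function.comp_apply]
    rw [Fc_append, show Fc Δ [a] (wrefl V (Δ a) (Fc Δ t v))
        = wrefl V (Δ a) (wrefl V (Δ a) (Fc Δ t v)) from rfl,
      wrefl_invol _ (hΔ0 a), ih]

lemma Fc_rev' (hΔ0 : ∀ j, Δ j ≠ 0) (l : List (Fin r)) (v : V) :
    Fc Δ l (Fc Δ l.reverse v) = v := by
  have := Fc_rev Δ hΔ0 l.reverse v
  rwa [List.reverse_reverse] at this

lemma Fc_conj (hΔ0 : ∀ j, Δ j ≠ 0) (l : List (Fin r)) (α : V) (hα : α ≠ 0) (v : V) :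
    wrefl V (Fc Δ l α) (Fc Δ l v) = Fc Δ l (wrefl V α v) := by
  rw [wrefl_apply, wrefl_apply, Fc_inner Δ hΔ0, Fc_inner Δ hΔ0, ← Fc_smul, ← Fc_sub]

lemma Fc_mem {Φ : Set V} (hrefl : ∀ α ∈ Φ, ∀ β ∈ Φ, wrefl V α β ∈ Φ)
    (hΔΦ : ∀ j, Δ j ∈ Φ) (l : List (Fin r)) {β : V} (hβ : β ∈ Φ) :
    Fc Δ l β ∈ Φ := by
  induction l with
  | nil => exact hβ
  | cons a t ih => exact hrefl _ (hΔΦ a) _ ih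

end word


section pos
variable {V : Type} [NormedAddCommGroup V] [InnerProductSpace ℝ V]
variable {r : ℕ} (Δ : Fin r → V)

def IsPos (β : V) : Prop :=
  ∃ c : Fin r → ℝ, β = ∑ j : Fin r, c j • Δ j ∧ ∀ j, 0 ≤ c j

lemma coeff_unique (hind : LinearIndependent ℝ Δ) {c d : Fin r → ℝ}
    (h : ∑ j : Fin r, c j • Δ j = ∑ j : Fin r, d j • Δ j) : c = d := by
  funext j
  have h2 : ∑ j : Fin r, (c - d) j • Δ j = 0 := by
    simp only [Pi.sub_apply, sub_smul, Finset.sum_sub_distrib, h, sub_self]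
  have := Fintype.linearIndependent_iff.mp hind (c - d) h2 j
  simpa [sub_eq_zero] using this

lemma isPos_delta (i : Fin r) : IsPos Δ (Δ i) := by
  refine ⟨fun j => if j = i then 1 else 0, ?_, fun j => by positivity⟩
  simp [ite_smul]

lemma pos_or_neg {Φ : Set V}
    (hbase : ∀ β ∈ Φ, ∃ c : Fin r → ℝ,
      β = ∑ j : Fin r, c j • Δ j ∧ ((∀ j, 0 ≤ c j) ∨ (∀ j, c j ≤ 0)))
    {β : V} (hβ : β ∈ Φ) : IsPos Δ β ∨ IsPos Δ (-β) := by
  obtain ⟨c, hc, hd⟩ := hbase β hβ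
  rcases hd with h | h
  · exact Or.inl ⟨c, hc, h⟩
  · refine Or.inr ⟨fun j => -(c j), ?_, fun j => by simpa using h j⟩
    rw [hc]
    simp [neg_smul, Finset.sum_neg_distrib]

lemma not_both (hind : LinearIndependent ℝ Δ) {Φ : Set V} (h0 : (0:V) ∉ Φ)
    {β : V} (hβ : β ∈ Φ) (h1 : IsPos Δ β) (h2 : IsPos Δ (-β)) : False := by
  obtain ⟨c, hc, hcp⟩ := h1
  obtain ⟨d, hd, hdp⟩ := h2
  have hsum : ∑ j : Fin r, (c + d) j • Δ j = ∑ j : Fin r, (0 : Fin r → ℝ) j • Δ j := by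
    simp only [Pi.add_apply, add_smul, Finset.sum_add_distrib, ← hc, ← hd,
      add_neg_cancel, Pi.zero_apply, zero_smul, Finset.sum_const_zero]
  have hcd := coeff_unique Δ hind hsum
  have hc0 : ∀ j, c j = 0 := by
    intro j
    have := congrFun hcd j
    simp only [Pi.add_apply, Pi.zero_apply] at this
    linarith [hcp j, hdp j]
  apply h0
  have : β = 0 := by
    rw [hc]
    simp [hc0]
  rwa [this] at hβ

lemma inner_nonneg_of_isPos {β γ : V} (h : IsPos Δ β)
    (hγ : ∀ j : Fin r, 0 ≤ ⟪γ, Δ j⟫) : 0 ≤ ⟪γ, β⟫ := by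
  obtain ⟨c, hc, hcp⟩ := h
  rw [hc, inner_sum]
  apply Finset.sum_nonneg
  intro j _
  rw [real_inner_smul_right]
  exact mul_nonneg (hcp j) (hγ j)

lemma isPos_wrefl (hind : LinearIndependent ℝ Δ) {Φ : Set V} (h0 : (0:V) ∉ Φ)
    (hline : ∀ α ∈ Φ, {β | β ∈ Φ ∧ ∃ c : ℝ, β = c • α} = {α, -α})
    (hbase : ∀ β ∈ Φ, ∃ c : Fin r → ℝ,
      β = ∑ j : Fin r, c j • Δ j ∧ ((∀ j, 0 ≤ c j) ∨ (∀ j, c j ≤ 0)))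
    {β : V} (hβΦ : β ∈ Φ) (i : Fin r) (hΔi : Δ i ∈ Φ)
    (hmem : wrefl V (Δ i) β ∈ Φ) (hpos : IsPos Δ β) (hne : β ≠ Δ i) :
    IsPos Δ (wrefl V (Δ i) β) := by
  have hΔi0 : Δ i ≠ 0 := fun h => h0 (h ▸ hΔi)
  obtain ⟨c, hc, hcp⟩ := hpos
  set t : ℝ := 2 * ⟪β, Δ i⟫ / ⟪Δ i, Δ i⟫ with ht
  have hw : wrefl V (Δ i) β = β - t • Δ i := rfl
  set c' : Fin r → ℝ := fun j => if j = i then c i - t else c j with hc'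
  have hsum : wrefl V (Δ i) β = ∑ j : Fin r, c' j • Δ j := by
    have key : ∀ j : Fin r, c' j • Δ j
        = c j • Δ j - (if j = i then t • Δ i else 0) := by
      intro j
      by_cases h : j = i
      · subst h; simp [hc', sub_smul]
      · simp [hc', h]
    rw [hw, hc, Finset.sum_congr rfl (fun j _ => key j), Finset.sum_sub_distrib]
    simp
  obtain ⟨d, hd, hdich⟩ := hbase _ hmem
  have hdc' : d = c' := coeff_unique Δ hind (by rw [← hd, hsum])
  rcases hdich with h | h
  · exact ⟨d, hd, h⟩
  · exfalso
    have hcz : ∀ j, j ≠ i → c j = 0 := by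
      intro j hj
      have h1 := h j
      rw [hdc'] at h1
      simp only [hc', if_neg hj] at h1
      linarith [hcp j]
    have hβci : β = c i • Δ i := by
      rw [hc]
      rw [Finset.sum_eq_single i (fun j _ hj => by rw [hcz j hj, zero_smul])
        (fun h => absurd (Finset.mem_univ i) h)]
    have hmem2 : β ∈ ({Δ i, -Δ i} : Set V) := by
      rw [← hline (Δ i) hΔi]
      exact ⟨hβΦ, c i, hβci⟩
    rcases hmem2 with h1 | h1
    · exact hne h1
    · have : (c i + 1) • Δ i = 0 := by
        rw [add_smul, one_smul, ← hβci, h1]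
        abel
      rcases smul_eq_zero.mp this with h2 | h2
      · have := hcp i; linarith [h2]
      · exact hΔi0 h2
end pos


section exchange
variable {V : Type} [NormedAddCommGroup V] [InnerProductSpace ℝ V]
variable {r : ℕ}

lemma wrefl_inner_self (α : V) (hα : α ≠ 0) (u : V) :
    ⟪wrefl V α u, α⟫ = -⟪u, α⟫ := by
  have hQ : ⟪α, α⟫ ≠ (0:ℝ) := fun h => hα (inner_self_eq_zero.mp h)
  simp only [wrefl_apply, inner_sub_left, real_inner_smul_left]
  field_simp
  ring

lemma exchange (Δ : Fin r → V) (hind : LinearIndependent ℝ Δ) {Φ : Set V}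
    (h0 : (0:V) ∉ Φ)
    (hrefl : ∀ α ∈ Φ, ∀ β ∈ Φ, wrefl V α β ∈ Φ)
    (hline : ∀ α ∈ Φ, {β | β ∈ Φ ∧ ∃ c : ℝ, β = c • α} = {α, -α})
    (hΔΦ : ∀ j, Δ j ∈ Φ)
    (hbase : ∀ β ∈ Φ, ∃ c : Fin r → ℝ,
      β = ∑ j : Fin r, c j • Δ j ∧ ((∀ j, 0 ≤ c j) ∨ (∀ j, c j ≤ 0)))
    (l : List (Fin r)) (a : Fin r) (h : IsPos Δ (-(Fc Δ l (Δ a)))) :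
    ∃ l' : List (Fin r), l'.length + 1 = l.length ∧
      Fc Δ l' = Fc Δ l ∘ wrefl V (Δ a) := by
  have hΔ0 : ∀ j, Δ j ≠ 0 := fun j hj => h0 (hj ▸ hΔΦ j)
  induction l generalizing a with
  | nil =>
    exact absurd h (fun h => not_both Δ hind h0 (hΔΦ a) (isPos_delta Δ a) h)
  | cons b t ih =>
    simp only [Fc_cons, Function.comp_apply] at h
    have hβΦ : Fc Δ t (Δ a) ∈ Φ := Fc_mem Δ hrefl hΔΦ t (hΔΦ a)
    rcases pos_or_neg Δ hbase hβΦ with hp | hn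
    · have hsb : wrefl V (Δ b) (Fc Δ t (Δ a)) ∈ Φ := hrefl _ (hΔΦ b) _ hβΦ
      have heq : Fc Δ t (Δ a) = Δ b := by
        by_contra hne
        exact not_both Δ hind h0 hsb
          (isPos_wrefl Δ hind h0 hline hbase hβΦ b (hΔΦ b) hsb hp hne) h
      refine ⟨t, rfl, ?_⟩
      funext v
      simp only [Fc_cons, Function.comp_apply]
      rw [← heq, Fc_conj Δ hΔ0 t (Δ a) (hΔ0 a), wrefl_invol _ (hΔ0 a)]
    · obtain ⟨t', hlen, hFc⟩ := ih a hn
      refine ⟨b :: t', by simp [← hlen], ?_⟩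
      funext v
      simp only [Fc_cons, Function.comp_apply]
      rw [hFc]
      rfl

end exchange


/-- if `w_{i₁} ⋯ w_{i_N}` is a reduced word in the Weyl group of a finite root
system `Φ` with base `Δ = (α₁, …, α_r)` and `γ` has nonnegative inner product with every
element of the base, then `⟨w_{i₁} ⋯ w_{i_N}(γ), α_{i₁}⟩ ≤ 0`. -/
theorem statement_17
    (V : Type) [NormedAddCommGroup V] [InnerProductSpace ℝ V] [FiniteDimensional ℝ V]
    (Φ : Set V) (hfin : Φ.Finite) (h0 : (0 : V) ∉ Φ)
    (hrefl : ∀ α ∈ Φ, ∀ β ∈ Φ, wrefl V α β ∈ Φ)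
    (hline : ∀ α ∈ Φ, {β | β ∈ Φ ∧ ∃ c : ℝ, β = c • α} = {α, -α})
    (r : ℕ) (Δ : Fin r → V)
    (hΔΦ : ∀ j, Δ j ∈ Φ)
    (hind : LinearIndependent ℝ Δ)
    (hspan : Submodule.span ℝ (Set.range Δ) = Submodule.span ℝ Φ)
    (hbase : ∀ β ∈ Φ, ∃ c : Fin r → ℝ,
      β = ∑ j : Fin r, c j • Δ j ∧ ((∀ j, 0 ≤ c j) ∨ (∀ j, c j ≤ 0)))
    (N : ℕ) (hN : 0 < N) (ι : Fin N → Fin r)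
    (hred : ∀ (m : ℕ) (κ : Fin m → Fin r),
      (List.ofFn fun t => wrefl V (Δ (κ t))).foldr (· ∘ ·) id
          = (List.ofFn fun t => wrefl V (Δ (ι t))).foldr (· ∘ ·) id →
      N ≤ m)
    (γ : V) (hγ : ∀ j : Fin r, 0 ≤ ⟪γ, Δ j⟫) :
    ⟪((List.ofFn fun t => wrefl V (Δ (ι t))).foldr (· ∘ ·) id) γ, Δ (ι ⟨0, hN⟩)⟫ ≤ 0 := by
  have hΔ0 : ∀ j, Δ j ≠ 0 := fun j hj => h0 (hj ▸ hΔΦ j)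
  have hofn : ∀ (m : ℕ) (κ : Fin m → Fin r),
      (List.ofFn fun t => wrefl V (Δ (κ t))).foldr (· ∘ ·) id = Fc Δ (List.ofFn κ) := by
    intro m κ
    unfold Fc
    rw [List.map_ofFn]
    rfl
  rw [hofn]
  obtain ⟨n, rfl⟩ : ∃ n, N = n + 1 := ⟨N - 1, by omega⟩
  have h00 : (⟨0, hN⟩ : Fin (n+1)) = 0 := by ext; simp
  have hLT : List.ofFn ι = ι ⟨0, hN⟩ :: List.ofFn (fun i : Fin n => ι i.succ) := by
    rw [List.ofFn_succ, h00]
  set a : Fin r := ι ⟨0, hN⟩ with ha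
  set T : List (Fin r) := List.ofFn (fun i : Fin n => ι i.succ) with hT
  rw [hLT, Fc_cons, Function.comp_apply, wrefl_inner_self _ (hΔ0 a), neg_nonpos]
  have hβΦ : Fc Δ T.reverse (Δ a) ∈ Φ := Fc_mem Δ hrefl hΔΦ _ (hΔΦ a)
  have h2 : ⟪Fc Δ T γ, Δ a⟫ = ⟪γ, Fc Δ T.reverse (Δ a)⟫ := by
    conv_lhs => rw [show Δ a = Fc Δ T (Fc Δ T.reverse (Δ a)) from
      (Fc_rev' Δ hΔ0 T (Δ a)).symm]
    rw [Fc_inner Δ hΔ0]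
  rw [h2]
  rcases pos_or_neg Δ hbase hβΦ with hp | hneg
  · exact inner_nonneg_of_isPos Δ hp hγ
  · exfalso
    obtain ⟨l', hlen, hFc⟩ := exchange Δ hind h0 hrefl hline hΔΦ hbase T.reverse a hneg
    have hTlen : T.reverse.length = n := by simp [hT]
    have hFL : Fc Δ l'.reverse = Fc Δ (List.ofFn ι) := by
      funext v
      have hv : Fc Δ l' (wrefl V (Δ a) (Fc Δ T v)) = v := by
        rw [hFc]
        simp only [Function.comp_apply]
        rw [wrefl_invol _ (hΔ0 a), Fc_rev Δ hΔ0]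
      conv_lhs => rw [← hv]
      rw [Fc_rev Δ hΔ0, hLT, Fc_cons, Function.comp_apply]
    have hge := hred l'.reverse.length (fun t => l'.reverse.get t) ?_
    · rw [List.length_reverse] at hge
      omega
    · rw [hofn]
      rw [show List.ofFn (fun t => l'.reverse.get t) = l'.reverse from List.ofFn_get _]
      rw [hFL]
      exact (hofn _ ι).symm

end MDS
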